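/- arXiv:2311.06821 — 3 statements merged into one kernel-verified Lean document; each statement's English description precedes it below -/
import Mathlib

section
/- Let n ≥ 1 and m ≥ 1. Let F, G₁,…,G_n ∈ ℝ⟦x,y₁,…,y_n⟧ be formal power series with zero constant term. Let Γ_y = (Γ_{y₁},…,Γ_{y_n}) ∈ (xℝ⟦x⟧)^n with ord_x Γ_{y_i} ≥ m for every i, and suppose that G_i∘Γ = (F∘Γ)·(d/dx)Γ_{y_i} in ℝ⟦x⟧ for every i, where H∘Γ denotes the substitution of (x, Γ_{y₁}(x),…,Γ_{y_n}(x)) into H. Then ord_x G_i(x,0,…,0) ≥ m for every i. -/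
open scoped Topology
open Filter Set

noncomputable section

/-! ### Θ embedding and block matrices -/

/-- `Θ : ℂ → M₂(ℝ)`, `a+bi ↦ aI₂ + bJ₂`. -/
def theta (z : ℂ) : Matrix (Fin 2) (Fin 2) ℝ :=
  Matrix.of ![![z.re, -z.im], ![z.im, z.re]]

/-- Block index type `(Fin n₁ × Fin 2) ⊕ Fin n₂` for matrices `Θ(·) ⊕ ·`. -/
abbrev BIdx (n₁ n₂ : ℕ) := (Fin n₁ × Fin 2) ⊕ Fin n₂

/-- Real part of a complex polynomial, as a real polynomial. -/
def reP (P : Polynomial ℂ) : Polynomial ℝ :=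
  ∑ k ∈ Finset.range (P.natDegree + 1), Polynomial.C ((P.coeff k).re) * Polynomial.X ^ k

/-- Imaginary part of a complex polynomial, as a real polynomial. -/
def imP (P : Polynomial ℂ) : Polynomial ℝ :=
  ∑ k ∈ Finset.range (P.natDegree + 1), Polynomial.C ((P.coeff k).im) * Polynomial.X ^ k

/-- Order (valuation at 0) of a real polynomial, `⊤` for the zero polynomial. -/
def ordP (P : Polynomial ℝ) : ℕ∞ :=
  if P = 0 then ⊤ else (P.rootMultiplicity 0 : ℕ∞)

/-- `P > 0`: `P` is eventually positive as `x → 0⁺`. -/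
def evPos (P : Polynomial ℝ) : Prop :=
  ∀ᶠ x in 𝓝[>] (0 : ℝ), 0 < P.eval x

/-- `Θ` of a complex polynomial, as a 2×2 matrix of real polynomials. -/
def thetaPoly (P : Polynomial ℂ) : Matrix (Fin 2) (Fin 2) (Polynomial ℝ) :=
  Matrix.of ![![reP P, -imP P], ![imP P, reP P]]

/-- The exponential part `D = Θ(diag c) ⊕ diag d` as a matrix of real polynomials. -/
def expPartPoly {n₁ n₂ : ℕ} (c : Fin n₁ → Polynomial ℂ) (d : Fin n₂ → Polynomial ℝ) :
    Matrix (BIdx n₁ n₂) (BIdx n₁ n₂) (Polynomial ℝ) :=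
  Matrix.of fun i j =>
    match i, j with
    | Sum.inl (j₁, a), Sum.inl (k₁, b) => if j₁ = k₁ then thetaPoly (c j₁) a b else 0
    | Sum.inr j₁, Sum.inr k₁ => if j₁ = k₁ then d j₁ else 0
    | _, _ => 0

/-- The exponential part evaluated at `x : ℝ`. -/
def expPart {n₁ n₂ : ℕ} (c : Fin n₁ → Polynomial ℂ) (d : Fin n₂ → Polynomial ℝ) (x : ℝ) :
    Matrix (BIdx n₁ n₂) (BIdx n₁ n₂) ℝ :=
  (expPartPoly c d).map (Polynomial.eval x)

/-- A residual part `C = Θ(C') ⊕ E`. -/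
def resPart {n₁ n₂ : ℕ} (C' : Matrix (Fin n₁) (Fin n₁) ℂ) (E : Matrix (Fin n₂) (Fin n₂) ℝ) :
    Matrix (BIdx n₁ n₂) (BIdx n₁ n₂) ℝ :=
  Matrix.of fun i j =>
    match i, j with
    | Sum.inl (j₁, a), Sum.inl (k₁, b) => theta (C' j₁ k₁) a b
    | Sum.inr j₁, Sum.inr k₁ => E j₁ k₁
    | _, _ => 0

/-- Compatibility of the residual blocks `(C', E)` with the exponential data `(c, d)`. -/
def Compatible {n₁ n₂ : ℕ} (c : Fin n₁ → Polynomial ℂ) (d : Fin n₂ → Polynomial ℝ)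
    (C' : Matrix (Fin n₁) (Fin n₁) ℂ) (E : Matrix (Fin n₂) (Fin n₂) ℝ) : Prop :=
  (∀ j k, c j ≠ c k → C' j k = 0) ∧ (∀ j k, d j ≠ d k → E j k = 0)

/-- degrees of all entries of the exponential data are `≤ q - 1`. -/
def DegLT (q : ℕ) {n₁ n₂ : ℕ} (c : Fin n₁ → Polynomial ℂ) (d : Fin n₂ → Polynomial ℝ) : Prop :=
  (∀ j, (c j).degree < (q : ℕ)) ∧ ∀ j, (d j).degree < (q : ℕ)

/-- The complex spectrum of a real square matrix. -/
def cSpec {ι : Type*} [Fintype ι] [DecidableEq ι] (C : Matrix ι ι ℝ) : Set ℂ :=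
  spectrum ℂ (C.map fun r : ℝ => (r : ℂ))

/-- Good spectrum: no two complex eigenvalues differ by a nonzero integer. -/
def GoodSpec {ι : Type*} [Fintype ι] [DecidableEq ι] (C : Matrix ι ι ℝ) : Prop :=
  ∀ μ ∈ cSpec C, ∀ ν ∈ cSpec C, ∀ k : ℤ, k ≠ 0 → μ - ν ≠ (k : ℂ)

/-- All complex eigenvalues have strictly negative real part. -/
def NegSpec {ι : Type*} [Fintype ι] [DecidableEq ι] (C : Matrix ι ι ℝ) : Prop :=
  ∀ μ ∈ cSpec C, μ.re < 0

/-- No dominant rotation: `ord (Re c_j) ≤ ord (Im c_j)` for every `j`. -/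
def NoDominantRotation {n₁ : ℕ} (c : Fin n₁ → Polynomial ℂ) : Prop :=
  ∀ j, ordP (reP (c j)) ≤ ordP (imP (c j))

/-- The unstability index `u(D)`. -/
def uIndex {n₁ n₂ : ℕ} (c : Fin n₁ → Polynomial ℂ) (d : Fin n₂ → Polynomial ℝ) : ℕ :=
  2 * Set.ncard {j : Fin n₁ | evPos (reP (c j))} + Set.ncard {j : Fin n₂ | evPos (d j)}

/-! ### Power series utilities -/

/-- Formal derivative of a power series. -/
def dX (f : PowerSeries ℝ) : PowerSeries ℝ :=
  PowerSeries.mk fun k => (k + 1 : ℝ) * PowerSeries.coeff (k + 1) f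

/-- A polynomial viewed as a power series. -/
def polyPS (p : Polynomial ℝ) : PowerSeries ℝ :=
  PowerSeries.mk fun k => p.coeff k

/-- Ramification `f(x) ↦ f(x^r)` on power series. -/
def ramify (r : ℕ) (f : PowerSeries ℝ) : PowerSeries ℝ :=
  PowerSeries.mk fun k => if r ∣ k then PowerSeries.coeff (k / r) f else 0

/-- Evaluation at `x` of the truncation to degree `≤ N` of a power series (the `N`-jet). -/
def jet (N : ℕ) (f : PowerSeries ℝ) (x : ℝ) : ℝ :=
  ∑ k ∈ Finset.range (N + 1), PowerSeries.coeff k f * x ^ k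

/-! ### Taylor series of smooth functions and substitution of formal curves -/

variable {ι : Type*} [Fintype ι] [DecidableEq ι]
variable {F : Type*} [NormedAddCommGroup F] [NormedSpace ℝ F]

/-- Partial derivative in the `x` direction. -/
def pdX (f : ℝ × (ι → ℝ) → F) : ℝ × (ι → ℝ) → F := fun p => fderiv ℝ f p (1, 0)

/-- Partial derivative in the `y i` direction. -/
def pdY (i : ι) (f : ℝ × (ι → ℝ) → F) : ℝ × (ι → ℝ) → F :=
  fun p => fderiv ℝ f p (0, Pi.single i 1)

/-- Iterated mixed partial derivative `∂_x^{α₀} ∂_y^{α} f`. -/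
def mDeriv (α₀ : ℕ) (α : ι → ℕ) (f : ℝ × (ι → ℝ) → F) : ℝ × (ι → ℝ) → F :=
  (pdX)^[α₀] ((Finset.univ : Finset ι).toList.foldr (fun i g => (pdY i)^[α i] g) f)

/-- The Taylor series at the origin of a smooth germ `f : ℝ × ℝ^ι → ℝ`,
as a multivariate formal power series in the variables `Option ι`
(`none` is the `x` variable, `some i` is `y i`). -/
def taylorSeries (f : ℝ × (ι → ℝ) → ℝ) : MvPowerSeries (Option ι) ℝ :=
  fun dd : Option ι →₀ ℕ =>
    (((dd none).factorial : ℝ) * ∏ i : ι, ((dd (some i)).factorial : ℝ))⁻¹ *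
      mDeriv (dd none) (fun i => dd (some i)) f (0, 0)

/-- Substitution of a tuple `c` of one-variable power series (each of positive order)
into a multivariate power series. -/
def substC (c : Option ι → PowerSeries ℝ) (g : MvPowerSeries (Option ι) ℝ) : PowerSeries ℝ :=
  PowerSeries.mk fun k =>
    ∑ dd ∈ Finset.Iic ((Finsupp.equivFunOnFinite).symm fun _ : Option ι => k),
      MvPowerSeries.coeff dd g * PowerSeries.coeff k (∏ v : Option ι, c v ^ dd v)

/-- The formal curve `(x, Γ(x))` as a tuple of one-variable power series. -/
def curveOf (Γ : ι → PowerSeries ℝ) : Option ι → PowerSeries ℝ :=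
  fun v => v.elim PowerSeries.X Γ

end

/-- If the first factor has all coefficients below `m` equal to zero, so does the product. -/
lemma coeff_mul_left_eq_zero (m : ℕ) (f g : PowerSeries ℝ)
    (hf : ∀ j < m, PowerSeries.coeff j f = 0) :
    ∀ k < m, PowerSeries.coeff k (f * g) = 0 := by
  intro k hk
  rw [PowerSeries.coeff_mul]
  apply Finset.sum_eq_zero
  intro p hp
  rw [Finset.HasAntidiagonal.mem_antidiagonal] at hp
  have h1 : p.1 ≤ k := by omega
  rw [hf p.1 (lt_of_le_of_lt h1 hk), zero_mul]

/-- Remark 2.3: if a formal vector field with zero constant term leaves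
invariant a formal curve `(x, Γ(x))` having contact of order `≥ m` with the `x`-axis, then its
`y`-components restricted to the `x`-axis have order `≥ m`. -/
theorem order_estimate_along_invariant_curve
    (n m : ℕ) (hn : 1 ≤ n) (hm : 1 ≤ m)
    (F : MvPowerSeries (Option (Fin n)) ℝ) (G : Fin n → MvPowerSeries (Option (Fin n)) ℝ)
    (hF : MvPowerSeries.constantCoeff F = 0)
    (hG : ∀ i, MvPowerSeries.constantCoeff (G i) = 0)
    (Γ : Fin n → PowerSeries ℝ)
    (hΓ : ∀ i, ∀ k < m, PowerSeries.coeff k (Γ i) = 0)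
    (hinv : ∀ i, substC (curveOf Γ) (G i) = substC (curveOf Γ) F * dX (Γ i)) :
    ∀ i, ∀ k < m,
      MvPowerSeries.coeff (Finsupp.single (none : Option (Fin n)) k) (G i) = 0 := by
  intro i k hk
  -- Step 1: identify the coefficient with that of the substituted series
  have key : MvPowerSeries.coeff (Finsupp.single (none : Option (Fin n)) k) (G i) =
      PowerSeries.coeff k (substC (curveOf Γ) (G i)) := by
    rw [substC, PowerSeries.coeff_mk]
    rw [Finset.sum_eq_single ((Finsupp.single (none : Option (Fin n)) k))]
    · -- value at `single none k`
      have hprod : (∏ v : Option (Fin n),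
          curveOf Γ v ^ (Finsupp.single (none : Option (Fin n)) k) v)
          = (PowerSeries.X : PowerSeries ℝ) ^ k := by
        rw [Fintype.prod_eq_single (none : Option (Fin n))]
        · simp [curveOf]
        · intro v hv
          rw [Finsupp.single_eq_of_ne hv, pow_zero]
      rw [hprod, PowerSeries.coeff_X_pow, if_pos rfl, mul_one]
    · -- other terms vanish
      intro dd _ hdd
      by_cases hy : ∀ j : Fin n, dd (some j) = 0
      · have hprod : (∏ v : Option (Fin n), curveOf Γ v ^ dd v)
            = (PowerSeries.X : PowerSeries ℝ) ^ dd none := by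
          rw [Fintype.prod_eq_single (none : Option (Fin n))]
          · simp [curveOf]
          · intro v hv
            match v with
            | some j => rw [hy j, pow_zero]
        have hne : dd none ≠ k := by
          intro h
          apply hdd
          ext v
          match v with
          | none => simpa using h
          | some j => simpa using hy j
        rw [hprod, PowerSeries.coeff_X_pow, if_neg (fun h => hne h.symm), mul_zero]
      · push_neg at hy
        obtain ⟨j, hj⟩ := hy
        have hmem : (some j : Option (Fin n)) ∈ (Finset.univ : Finset (Option (Fin n))) :=
          Finset.mem_univ _
        rw [← Finset.mul_prod_erase _ _ hmem]
        have he : dd (some j) = dd (some j) - 1 + 1 := by omega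
        rw [he, pow_succ]
        have : curveOf Γ (some j) ^ (dd (some j) - 1) * curveOf Γ (some j) *
              ∏ v ∈ Finset.univ.erase (some j), curveOf Γ v ^ dd v
            = curveOf Γ (some j) *
              (curveOf Γ (some j) ^ (dd (some j) - 1) *
               ∏ v ∈ Finset.univ.erase (some j), curveOf Γ v ^ dd v) := by ring
        rw [this]
        have hΓj : ∀ l < m, PowerSeries.coeff l (curveOf Γ (some j)) = 0 := by
          intro l hl
          exact hΓ j l hl
        rw [coeff_mul_left_eq_zero m _ _ hΓj k hk, mul_zero]
    · -- the distinguished index lies in the range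
      intro habs
      exfalso
      apply habs
      rw [Finset.mem_Iic]
      intro v
      match v with
      | none => simp
      | some j => simp
  rw [key, hinv i]
  -- Step 2: the right-hand side has order ≥ m
  rw [PowerSeries.coeff_mul]
  apply Finset.sum_eq_zero
  intro p hp
  rw [Finset.HasAntidiagonal.mem_antidiagonal] at hp
  rcases Nat.eq_zero_or_pos p.1 with h0 | h0
  · -- the substituted F has zero constant term
    have : PowerSeries.coeff 0 (substC (curveOf Γ) F) = 0 := by
      rw [substC, PowerSeries.coeff_mk]
      have h00 : ((Finsupp.equivFunOnFinite).symm fun _ : Option (Fin n) => (0:ℕ))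
          = (0 : Option (Fin n) →₀ ℕ) := by
        ext v; simp
      rw [h00]
      have : (Finset.Iic (0 : Option (Fin n) →₀ ℕ)) = {0} := by
        ext dd
        rw [Finset.mem_Iic, Finset.mem_singleton]
        constructor
        · intro h
          ext v
          exact Nat.le_zero.mp (h v)
        · rintro rfl
          exact le_refl _
      rw [this, Finset.sum_singleton]
      rw [MvPowerSeries.coeff_zero_eq_constantCoeff, hF, zero_mul]
    rw [h0, this, zero_mul]
  · -- the derivative factor vanishes in low degrees
    have hp2 : p.2 + 1 < m := by omega
    have : PowerSeries.coeff p.2 (dX (Γ i)) = 0 := by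
      rw [dX, PowerSeries.coeff_mk, hΓ i (p.2 + 1) hp2, mul_zero]
    rw [this, mul_zero]
end

section
/- Let q ≥ 1, β > 0 and t₀ ∈ ℝ. If a, b : (−∞,t₀] → (0,∞) are differentiable with a′(t) = a(t)^{q+1} and b′(t) = b(t)^{q+1} for all t ≤ t₀, and |a(t) − b(t)| = O(e^{βt}) as t → −∞, then a = b. -/
open scoped Topology
open Filter Set

/-- Conservation law: for a positive solution of `x' = x^{q+1}` on `Iic t₀`,
the quantity `(a t)⁻¹ ^ q + q * t` is constant. -/
lemma aux_conservation (q : ℕ) (hq : 1 ≤ q) (t₀ : ℝ) (a : ℝ → ℝ)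
    (hapos : ∀ t ∈ Iic t₀, 0 < a t)
    (ha : ∀ t ∈ Iic t₀, HasDerivWithinAt a (a t ^ (q + 1)) (Iic t₀) t) :
    ∀ t ∈ Iic t₀, (a t)⁻¹ ^ q + q * t = (a t₀)⁻¹ ^ q + q * t₀ := by
  obtain ⟨k, rfl⟩ : ∃ k, q = k + 1 := ⟨q - 1, by omega⟩
  set g : ℝ → ℝ := fun s => (a s)⁻¹ ^ (k + 1) + (k + 1 : ℝ) * s with hg
  have hg' : ∀ s ∈ Iic t₀, HasDerivWithinAt g ((fun _ : ℝ => (0 : ℝ)) s) (Iic t₀) s := by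
    intro s hs
    have hane : a s ≠ 0 := (hapos s hs).ne'
    have h1 := (((ha s hs).inv hane).pow (k + 1)).add
      ((hasDerivWithinAt_id s (Iic t₀)).const_mul ((k : ℝ) + 1))
    refine h1.congr_deriv ?_
    simp only [Nat.add_sub_cancel, mul_one, Nat.cast_add, Nat.cast_one, Pi.inv_apply, inv_pow]
    field_simp
    ring
  intro t ht
  have hbound : ∀ s ∈ Iic t₀, ‖(fun _ : ℝ => (0 : ℝ)) s‖ ≤ 0 := by simp
  have := (convex_Iic t₀).norm_image_sub_le_of_norm_hasDerivWithin_le hg' hbound ht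
    (self_mem_Iic (a := t₀))
  have h0 : ‖g t₀ - g t‖ ≤ 0 := by simpa using this
  have : g t = g t₀ := by
    have := norm_nonneg (g t₀ - g t)
    have : g t₀ - g t = 0 := by
      rw [← norm_eq_zero]; linarith
    linarith [sub_eq_zero.mp this]
  simpa [hg] using this

/-- Polynomial times decaying exponential tends to zero at `-∞`. -/
lemma aux_tendsto (β : ℝ) (hβ : 0 < β) (B qr : ℝ) :
    Filter.Tendsto (fun t => Real.exp (β * t) * (B - qr * t) ^ 3) atBot (𝓝 0) := by
  have h1 : Filter.Tendsto (fun t : ℝ => β * t) atBot atBot :=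
    (Filter.tendsto_id (α := ℝ)).const_mul_atBot hβ
  have h2 : Filter.Tendsto (fun t : ℝ => -(β * t)) atBot atTop :=
    Filter.tendsto_neg_atBot_atTop.comp h1
  set p : Polynomial ℝ := (Polynomial.C B + Polynomial.C (qr / β) * Polynomial.X) ^ 3 with hp
  have h3 := (p.tendsto_div_exp_atTop).comp h2
  refine h3.congr fun t => ?_
  have hβ' : β ≠ 0 := hβ.ne'
  have hev : p.eval (-(β * t)) = (B - qr * t) ^ 3 := by
    simp only [hp, Polynomial.eval_pow, Polynomial.eval_add, Polynomial.eval_C,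
      Polynomial.eval_mul, Polynomial.eval_X]
    congr 1
    field_simp
    ring
  simp only [Function.comp_apply, hev, Real.exp_neg, div_eq_mul_inv, inv_inv]
  ring

/-- Key contradiction: if the conserved constants differ, the solutions cannot be
exponentially close. -/
lemma aux_key (q : ℕ) (hq : 1 ≤ q) (β : ℝ) (hβ : 0 < β) (t₀ A B : ℝ) (hAB : A < B)
    (a b : ℝ → ℝ)
    (hapos : ∀ t ∈ Iic t₀, 0 < a t) (hbpos : ∀ t ∈ Iic t₀, 0 < b t)
    (hA : ∀ t ∈ Iic t₀, (a t)⁻¹ ^ q = A - q * t)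
    (hB : ∀ t ∈ Iic t₀, (b t)⁻¹ ^ q = B - q * t)
    (hclose : (fun t => a t - b t) =O[atBot] fun t => Real.exp (β * t)) : False := by
  set δ : ℝ := B - A with hδdef
  have hδ : 0 < δ := sub_pos.mpr hAB
  have hq0 : (0 : ℝ) < q := by exact_mod_cast hq
  obtain ⟨C, hC⟩ := hclose.bound
  set C₀ : ℝ := max C 1 with hC₀def
  have hC₀1 : (1 : ℝ) ≤ C₀ := le_max_right _ _
  have hC₀pos : 0 < C₀ := lt_of_lt_of_le one_pos hC₀1
  have hC' : ∀ᶠ t in atBot, |a t - b t| ≤ C₀ * Real.exp (β * t) := by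
    filter_upwards [hC] with t h
    calc |a t - b t| = ‖a t - b t‖ := rfl
      _ ≤ C * ‖Real.exp (β * t)‖ := h
      _ ≤ C₀ * Real.exp (β * t) := by
          rw [Real.norm_eq_abs, abs_of_pos (Real.exp_pos _)]
          exact mul_le_mul_of_nonneg_right (le_max_left _ _) (Real.exp_pos _).le
  have hsmall : ∀ᶠ t in atBot,
      Real.exp (β * t) * (B - q * t) ^ 3 < δ / (q * C₀) := by
    exact (aux_tendsto β hβ B q).eventually_lt_const (by positivity)
  have hbig : ∀ᶠ t in atBot, 1 ≤ B - q * t := by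
    have h1 : Filter.Tendsto (fun t : ℝ => q * (-t)) atBot atTop :=
      Filter.tendsto_neg_atBot_atTop.const_mul_atTop hq0
    have h2 : Filter.Tendsto (fun t : ℝ => B - q * t) atBot atTop := by
      have h := Filter.tendsto_atTop_add_const_left atBot B h1
      exact h.congr fun t => by ring
    exact h2.eventually_ge_atTop 1
  obtain ⟨t, ht₀, hCt, hst, hbt⟩ :=
    ((eventually_le_atBot t₀).and (hC'.and (hsmall.and hbig))).exists
  have htm : t ∈ Iic t₀ := ht₀
  set P : ℝ := B - q * t with hPdef
  have hP1 : (1 : ℝ) ≤ P := hbt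
  have hPpos : 0 < P := lt_of_lt_of_le one_pos hP1
  have pa : 0 < a t := hapos t htm
  have pb : 0 < b t := hbpos t htm
  set x : ℝ := (b t)⁻¹ with hxdef
  set y : ℝ := (a t)⁻¹ with hydef
  have hx0 : 0 < x := inv_pos.mpr pb
  have hy0 : 0 < y := inv_pos.mpr pa
  have hxq : x ^ q = P := hB t htm
  have hyq : y ^ q = A - q * t := hA t htm
  have hqne : q ≠ 0 := by omega
  have hyx : y < x := by
    rw [← pow_lt_pow_iff_left₀ hy0.le hx0.le hqne, hxq, hyq]
    linarith
  have hx1 : 1 ≤ x := by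
    by_contra h
    push_neg at h
    have := pow_lt_one₀ hx0.le h hqne
    rw [hxq] at this; linarith
  -- sum bound: each term of the geometric sum is at most x^q = P
  have hsum : (∑ i ∈ Finset.range q, x ^ i * y ^ (q - 1 - i)) ≤ q * P := by
    have : ∀ i ∈ Finset.range q, x ^ i * y ^ (q - 1 - i) ≤ P := by
      intro i hi
      rw [Finset.mem_range] at hi
      calc x ^ i * y ^ (q - 1 - i) ≤ x ^ i * x ^ (q - 1 - i) := by
            exact mul_le_mul_of_nonneg_left (pow_le_pow_left₀ hy0.le hyx.le _)
              (pow_nonneg hx0.le _)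
        _ = x ^ (i + (q - 1 - i)) := (pow_add x i _).symm
        _ ≤ x ^ q := pow_le_pow_right₀ hx1 (by omega)
        _ = P := hxq
    calc (∑ i ∈ Finset.range q, x ^ i * y ^ (q - 1 - i))
        ≤ ∑ _i ∈ Finset.range q, P := Finset.sum_le_sum this
      _ = q * P := by rw [Finset.sum_const, Finset.card_range, nsmul_eq_mul]
  have hgeom : δ ≤ q * P * (x - y) := by
    have hid : (∑ i ∈ Finset.range q, x ^ i * y ^ (q - 1 - i)) * (x - y) = x ^ q - y ^ q :=
      geom_sum₂_mul x y q
    have hδeq : δ = x ^ q - y ^ q := by rw [hxq, hyq]; ring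
    rw [hδeq, ← hid]
    exact mul_le_mul_of_nonneg_right hsum (sub_nonneg.mpr hyx.le)
  -- b t ≤ 1 and b t ≥ P⁻¹
  have hb1 : b t ≤ 1 := by
    have h := mul_le_mul_of_nonneg_left hx1 pb.le
    rw [mul_one, hxdef, mul_inv_cancel₀ pb.ne'] at h
    linarith
  have hbq : b t ^ q = P⁻¹ := by
    have : (b t ^ q)⁻¹ = P := by rw [← inv_pow]; exact hxq
    rw [← this, inv_inv]
  have hbP : P⁻¹ ≤ b t := by
    rw [← hbq]
    exact pow_le_of_le_one pb.le hb1 hqne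
  have e1 : (a t)⁻¹ * (a t * b t) = b t := by
    rw [← mul_assoc, inv_mul_cancel₀ pa.ne', one_mul]
  have e2 : (b t)⁻¹ * (a t * b t) = a t := by
    rw [mul_comm (a t) (b t), ← mul_assoc, inv_mul_cancel₀ pb.ne', one_mul]
  have hba : b t < a t := by
    have h := mul_lt_mul_of_pos_right hyx (mul_pos pa pb)
    rwa [hydef, hxdef, e1, e2] at h
  have haP : P⁻¹ ≤ a t := hbP.trans hba.le
  have hab : a t - b t = (x - y) * (a t * b t) := by
    rw [sub_mul, hxdef, hydef, e2, e1]
  have hABprod : P⁻¹ * P⁻¹ ≤ a t * b t :=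
    mul_le_mul haP hbP (by positivity) pa.le
  have hPP : P ^ 3 * (P⁻¹ * P⁻¹) = P := by
    field_simp
  have hlow2 : δ ≤ q * P ^ 3 * (a t - b t) := by
    calc δ ≤ q * P * (x - y) := hgeom
      _ = q * P ^ 3 * (P⁻¹ * P⁻¹) * (x - y) := by
          rw [show (q : ℝ) * P ^ 3 * (P⁻¹ * P⁻¹) = q * (P ^ 3 * (P⁻¹ * P⁻¹)) by ring, hPP]
      _ ≤ q * P ^ 3 * (a t * b t) * (x - y) := by
          exact mul_le_mul_of_nonneg_right
            (mul_le_mul_of_nonneg_left hABprod (by positivity)) (sub_nonneg.mpr hyx.le)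
      _ = q * P ^ 3 * (a t - b t) := by rw [hab]; ring
  have hup : a t - b t ≤ C₀ * Real.exp (β * t) := le_trans (le_abs_self _) hCt
  have hup2 : q * C₀ * (Real.exp (β * t) * P ^ 3) < δ := by
    rw [lt_div_iff₀ (by positivity)] at hst
    calc q * C₀ * (Real.exp (β * t) * P ^ 3)
        = Real.exp (β * t) * P ^ 3 * (↑q * C₀) := by ring
      _ < δ := hst
  have hchain : q * P ^ 3 * (a t - b t) ≤ q * C₀ * (Real.exp (β * t) * P ^ 3) := by
    calc q * P ^ 3 * (a t - b t) ≤ q * P ^ 3 * (C₀ * Real.exp (β * t)) :=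
          mul_le_mul_of_nonneg_left hup (by positivity)
      _ = q * C₀ * (Real.exp (β * t) * P ^ 3) := by ring
  linarith
/-- uniqueness step in Proposition 3.3: two positive solutions of
`x′ = x^{q+1}` on `(−∞, t₀]` which are exponentially close as `t → −∞` coincide. -/
theorem exponentially_close_solutions_coincide
    (q : ℕ) (hq : 1 ≤ q) (β t₀ : ℝ) (hβ : 0 < β)
    (a b : ℝ → ℝ)
    (hapos : ∀ t ∈ Iic t₀, 0 < a t) (hbpos : ∀ t ∈ Iic t₀, 0 < b t)
    (ha : ∀ t ∈ Iic t₀, HasDerivWithinAt a (a t ^ (q + 1)) (Iic t₀) t)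
    (hb : ∀ t ∈ Iic t₀, HasDerivWithinAt b (b t ^ (q + 1)) (Iic t₀) t)
    (hclose : (fun t => a t - b t) =O[atBot] fun t => Real.exp (β * t)) :
    ∀ t ∈ Iic t₀, a t = b t := by
  have Fa := aux_conservation q hq t₀ a hapos ha
  have Fb := aux_conservation q hq t₀ b hbpos hb
  set A : ℝ := (a t₀)⁻¹ ^ q + q * t₀ with hAdef
  set B : ℝ := (b t₀)⁻¹ ^ q + q * t₀ with hBdef
  have hA : ∀ t ∈ Iic t₀, (a t)⁻¹ ^ q = A - q * t := by
    intro t ht; have := Fa t ht; linarith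
  have hB : ∀ t ∈ Iic t₀, (b t)⁻¹ ^ q = B - q * t := by
    intro t ht; have := Fb t ht; linarith
  rcases lt_trichotomy A B with h | h | h
  · exact absurd (aux_key q hq β hβ t₀ A B h a b hapos hbpos hA hB hclose) (by simp)
  · intro t ht
    have pa := hapos t ht
    have pb := hbpos t ht
    have heq : (a t)⁻¹ ^ q = (b t)⁻¹ ^ q := by rw [hA t ht, hB t ht, h]
    have hqne : q ≠ 0 := by omega
    have hinv : (a t)⁻¹ = (b t)⁻¹ := by
      have h1 := le_of_pow_le_pow_left₀ hqne (inv_pos.mpr pb).le heq.le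
      have h2 := le_of_pow_le_pow_left₀ hqne (inv_pos.mpr pa).le heq.ge
      linarith
    exact (inv_injective hinv)
  · have hclose' : (fun t => b t - a t) =O[atBot] fun t => Real.exp (β * t) := by
      have := hclose.neg_left
      simpa [neg_sub] using this
    exact absurd (aux_key q hq β hβ t₀ B A h b a hbpos hapos hB hA hclose') (by simp)
end

section
/- Let q ≥ 1, N ≥ 0, and n = m + p with m ≥ 0, p ≥ 1. Let D_z ∈ M_m(ℝ[x]) and D_w ∈ M_p(ℝ[x]) be polynomial matrices of degree ≤ q−1 with D_z(0) = 0 and D_w(0) invertible, and let C_z ∈ M_m(ℝ), C_w ∈ M_p(ℝ). Let V_z : W → ℝ^m and V_w : W → ℝ^p be continuous on a neighborhood W of 0 ∈ ℝ^{1+n}. Suppose h : W₀ → ℝ^p is of class C^{n(q+1+N)+1} on a neighborhood W₀ of 0 ∈ ℝ^{1+m} and satisfies, for all (x,z) ∈ W₀ (with (x,z,h(x,z)) ∈ W): (D_w(x)+x^q·C_w)·h(x,z) + x^{q+1+N}·V_w(x,z,h(x,z)) = x^{q+1}·∂_x h(x,z) + (∂_z h(x,z))·[ (D_z(x)+x^q·C_z)·z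 + x^{q+1+N}·V_z(x,z,h(x,z)) ]. Then there exists a map g of class C^{(n−1)(q+1+N)+1} on a neighborhood of 0 in ℝ^{1+m} such that h(x,z) = x^{q+1+N}·g(x,z) there. -/
open scoped Topology
open Filter Set

set_option maxHeartbeats 1000000

section AuxDiv
open intervalIntegral MeasureTheory Metric

variable {Y : Type} [NormedAddCommGroup Y] [NormedSpace ℝ Y] [ProperSpace Y]

set_option synthInstance.maxHeartbeats 1000000 in
set_option maxHeartbeats 1000000 in
lemma contDiffOn_parametric_integral (n : ℕ) :
    ∀ (G : Type) [NormedAddCommGroup G] [NormedSpace ℝ G] [CompleteSpace G]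
    (φ : ℝ × Y → G) (O : Set (ℝ × Y)) (U : Set Y), IsOpen O → IsOpen U →
    (∀ t ∈ Set.Icc (0:ℝ) 1, ∀ y ∈ U, (t, y) ∈ O) → ContDiffOn ℝ n φ O →
    ContDiffOn ℝ n (fun y => ∫ t in (0:ℝ)..1, φ (t, y)) U := by
  have hIoc : Set.uIoc (0:ℝ) 1 = Set.Ioc 0 1 := Set.uIoc_of_le zero_le_one
  have hIcc : Set.uIcc (0:ℝ) 1 = Set.Icc 0 1 := Set.uIcc_of_le zero_le_one
  have hIsub : Set.uIoc (0:ℝ) 1 ⊆ Set.Icc 0 1 := by rw [hIoc]; exact Set.Ioc_subset_Icc_self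
  induction n with
  | zero =>
    intro G _ _ _ φ O U hO hU hsub hφ
    have meas : ∀ (y : Y), (∀ t ∈ Set.Icc (0:ℝ) 1, (t, y) ∈ O) →
        ContinuousOn (fun t => φ (t, y)) (Set.Icc (0:ℝ) 1) := fun y hy =>
      (contDiffOn_zero.mp hφ).comp ((continuous_id.prodMk continuous_const).continuousOn) hy
    simp only [Nat.cast_zero, contDiffOn_zero] at hφ ⊢
    intro y₀ hy₀
    apply ContinuousAt.continuousWithinAt
    obtain ⟨δ, hδ, hball⟩ : ∃ δ > 0, closedBall y₀ δ ⊆ U := by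
      rcases Metric.mem_nhds_iff.1 (hU.mem_nhds hy₀) with ⟨ε, hε, hb⟩
      exact ⟨ε/2, half_pos hε, (closedBall_subset_ball (half_lt_self hε)).trans hb⟩
    have hK : IsCompact ((Set.Icc (0:ℝ) 1) ×ˢ closedBall y₀ δ) :=
      isCompact_Icc.prod (isCompact_closedBall _ _)
    have hKO : (Set.Icc (0:ℝ) 1) ×ˢ closedBall y₀ δ ⊆ O := fun p hp =>
      hsub p.1 hp.1 p.2 (hball hp.2)
    obtain ⟨M, hM⟩ := hK.exists_bound_of_continuousOn (hφ.mono hKO)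
    apply intervalIntegral.continuousAt_of_dominated_interval (bound := fun _ => M)
    · filter_upwards [closedBall_mem_nhds y₀ hδ] with y hy
      exact ((meas y (fun t ht => hsub t ht y (hball hy))).mono hIsub).aestronglyMeasurable
        measurableSet_uIoc
    · filter_upwards [closedBall_mem_nhds y₀ hδ] with y hy
      filter_upwards with t
      intro ht
      exact hM (t, y) ⟨hIsub ht, hy⟩
    · exact intervalIntegrable_const
    · filter_upwards with t ht
      exact (hφ.continuousAt (hO.mem_nhds (hsub t (hIsub ht) y₀ hy₀))).comp
        ((continuous_const.prodMk continuous_id).continuousAt)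
  | succ n ih =>
    intro G _ _ _ φ O U hO hU hsub hφ
    set ψ : ℝ × Y → (Y →L[ℝ] G) := fun p => (fderiv ℝ φ p).comp (ContinuousLinearMap.inr ℝ ℝ Y)
      with hψdef
    have hφ1 : (1 : WithTop ℕ∞) ≤ (n + 1 : ℕ) := by
      exact_mod_cast Nat.one_le_iff_ne_zero.2 (Nat.succ_ne_zero n)
    have hφc : ContinuousOn φ O := hφ.continuousOn
    have meas : ∀ (y : Y), (∀ t ∈ Set.Icc (0:ℝ) 1, (t, y) ∈ O) →
        ContinuousOn (fun t => φ (t, y)) (Set.Icc (0:ℝ) 1) := fun y hy =>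
      hφc.comp ((continuous_id.prodMk continuous_const).continuousOn) hy
    have hdφ : ∀ p ∈ O, HasFDerivAt φ (fderiv ℝ φ p) p := fun p hp =>
      ((hφ.differentiableOn (by exact_mod_cast Nat.succ_ne_zero n)) p hp).differentiableAt (hO.mem_nhds hp) |>.hasFDerivAt
    have hψ : ContDiffOn ℝ n ψ O := by
      apply ContDiffOn.clm_comp _ contDiffOn_const
      apply hφ.fderiv_of_isOpen hO
      exact_mod_cast le_rfl
    have hψc : ContinuousOn ψ O := hψ.continuousOn
    have measψ : ∀ (y : Y), (∀ t ∈ Set.Icc (0:ℝ) 1, (t, y) ∈ O) →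
        ContinuousOn (fun t => ψ (t, y)) (Set.Icc (0:ℝ) 1) := fun y hy =>
      hψc.comp ((continuous_id.prodMk continuous_const).continuousOn) hy
    have key : ∀ y₀ ∈ U, HasFDerivAt (fun y => ∫ t in (0:ℝ)..1, φ (t, y))
        (∫ t in (0:ℝ)..1, ψ (t, y₀)) y₀ := by
      intro y₀ hy₀
      obtain ⟨δ, hδ, hball⟩ : ∃ δ > 0, closedBall y₀ δ ⊆ U := by
        rcases Metric.mem_nhds_iff.1 (hU.mem_nhds hy₀) with ⟨ε, hε, hb⟩
        exact ⟨ε/2, half_pos hε, (closedBall_subset_ball (half_lt_self hε)).trans hb⟩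
      have hK : IsCompact ((Set.Icc (0:ℝ) 1) ×ˢ closedBall y₀ δ) :=
        isCompact_Icc.prod (isCompact_closedBall _ _)
      have hKO : (Set.Icc (0:ℝ) 1) ×ˢ closedBall y₀ δ ⊆ O := fun p hp =>
        hsub p.1 hp.1 p.2 (hball hp.2)
      obtain ⟨M, hM⟩ := hK.exists_bound_of_continuousOn (hψc.mono hKO)
      apply intervalIntegral.hasFDerivAt_integral_of_dominated_of_fderiv_le
        (F' := fun y t => ψ (t, y)) (bound := fun _ => M) (ball_mem_nhds y₀ hδ)
      · filter_upwards [closedBall_mem_nhds y₀ hδ] with y hy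
        exact ((meas y (fun t ht => hsub t ht y (hball hy))).mono hIsub).aestronglyMeasurable
          measurableSet_uIoc
      · apply ContinuousOn.intervalIntegrable
        exact hIcc ▸ meas y₀ (fun t ht => hsub t ht y₀ hy₀)
      · exact ((measψ y₀ (fun t ht => hsub t ht y₀ hy₀)).mono hIsub).aestronglyMeasurable
          measurableSet_uIoc
      · filter_upwards with t ht y hy
        exact hM (t, y) ⟨hIsub ht, ball_subset_closedBall hy⟩
      · exact intervalIntegrable_const
      · filter_upwards with t ht y hy
        have h1 : HasFDerivAt (fun y : Y => (t, y)) (ContinuousLinearMap.inr ℝ ℝ Y) y :=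
          hasFDerivAt_prodMk_right t y
        exact (hdφ (t, y) (hsub t (hIsub ht) y (hball (ball_subset_closedBall hy)))).comp y h1
    have hdiff : DifferentiableOn ℝ (fun y => ∫ t in (0:ℝ)..1, φ (t, y)) U :=
      fun y hy => ((key y hy).differentiableAt).differentiableWithinAt
    have hcast : ((n + 1 : ℕ) : WithTop ℕ∞) = (n : WithTop ℕ∞) + 1 := by push_cast; ring
    rw [hcast, contDiffOn_succ_iff_fderiv_of_isOpen hU]
    refine ⟨hdiff, by simp, ?_⟩
    apply (ih (Y →L[ℝ] G) ψ O U hO hU hsub hψ).congr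
    intro y hy
    exact (key y hy).fderiv

end AuxDiv

section DivStep

variable {E F : Type} [NormedAddCommGroup E] [NormedSpace ℝ E] [FiniteDimensional ℝ E]
  [NormedAddCommGroup F] [NormedSpace ℝ F] [CompleteSpace F]

lemma div_step (k : ℕ) (ε : ℝ) (f : ℝ × E → F)
    (hf : ContDiffOn ℝ (k+1 : ℕ) f (Metric.ball 0 ε))
    (h0 : ∀ y ∈ Metric.ball (0 : ℝ × E) ε, y.1 = 0 → f y = 0) :
    ∃ g : ℝ × E → F, ContDiffOn ℝ (k : ℕ) g (Metric.ball 0 ε) ∧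
      ∀ y ∈ Metric.ball (0 : ℝ × E) ε, f y = y.1 • g y := by
  set V : Set (ℝ × E) := Metric.ball 0 ε with hV
  have hVo : IsOpen V := Metric.isOpen_ball
  have hst : ∀ y ∈ V, ∀ t : ℝ, |t| ≤ 1 → ((t * y.1, y.2) : ℝ × E) ∈ V := by
    intro y hy t ht
    rw [hV, mem_ball_zero_iff] at hy ⊢
    have h1 : ‖t * y.1‖ ≤ ‖y.1‖ := by
      rw [norm_mul]
      calc ‖t‖ * ‖y.1‖ ≤ 1 * ‖y.1‖ := by
            apply mul_le_mul_of_nonneg_right _ (norm_nonneg _)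
            simpa using ht
        _ = ‖y.1‖ := one_mul _
    calc ‖((t * y.1, y.2) : ℝ × E)‖ = max ‖t * y.1‖ ‖y.2‖ := rfl
      _ ≤ max ‖y.1‖ ‖y.2‖ := max_le_max h1 le_rfl
      _ = ‖y‖ := rfl
      _ < ε := hy
  have hf1 : (1 : WithTop ℕ∞) ≤ ((k+1 : ℕ) : WithTop ℕ∞) := by
    exact_mod_cast Nat.one_le_iff_ne_zero.2 (Nat.succ_ne_zero k)
  have hfd : ∀ y ∈ V, HasFDerivAt f (fderiv ℝ f y) y := fun y hy =>
    (((hf.differentiableOn (by exact_mod_cast Nat.succ_ne_zero k)) y hy).differentiableAt (hVo.mem_nhds hy)).hasFDerivAt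
  set D : ℝ × E → F := fun y => fderiv ℝ f y ((1:ℝ), (0:E)) with hD
  have hDk : ContDiffOn ℝ (k : ℕ) D V := by
    apply ContDiffOn.clm_apply _ contDiffOn_const
    apply hf.fderiv_of_isOpen hVo
    exact_mod_cast le_rfl
  have hσ : ContDiff ℝ (k : ℕ) (fun p : ℝ × (ℝ × E) => ((p.1 * p.2.1, p.2.2) : ℝ × E)) :=
    (contDiff_fst.mul (contDiff_fst.comp contDiff_snd)).prodMk (contDiff_snd.comp contDiff_snd)
  set O : Set (ℝ × (ℝ × E)) := (fun p : ℝ × (ℝ × E) => ((p.1 * p.2.1, p.2.2) : ℝ × E)) ⁻¹' V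
    with hO
  have hOo : IsOpen O := hVo.preimage hσ.continuous
  have hφ : ContDiffOn ℝ (k : ℕ) (fun p : ℝ × (ℝ × E) => D (p.1 * p.2.1, p.2.2)) O :=
    hDk.comp (hσ.contDiffOn) (fun p hp => hp)
  have hsub : ∀ t ∈ Set.Icc (0:ℝ) 1, ∀ y ∈ V, ((t, y) : ℝ × (ℝ × E)) ∈ O := by
    intro t ht y hy
    exact hst y hy t (abs_le.2 ⟨by linarith [ht.1], ht.2⟩)
  refine ⟨fun y => ∫ t in (0:ℝ)..1, D (t * y.1, y.2), ?_, ?_⟩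
  · exact contDiffOn_parametric_integral k F
      (fun p : ℝ × (ℝ × E) => D (p.1 * p.2.1, p.2.2)) O V hOo hVo hsub hφ
  · intro y hy
    have hder : ∀ t ∈ Set.uIcc (0:ℝ) 1,
        HasDerivAt (fun t : ℝ => f (t * y.1, y.2)) (y.1 • D (t * y.1, y.2)) t := by
      intro t ht
      rw [Set.uIcc_of_le zero_le_one] at ht
      have hmem : ((t * y.1, y.2) : ℝ × E) ∈ V := hst y hy t (abs_le.2 ⟨by linarith [ht.1], ht.2⟩)
      have hc : HasDerivAt (fun t : ℝ => ((t * y.1, y.2) : ℝ × E)) ((y.1, (0:E))) t := by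
        have h1 : HasDerivAt (fun t : ℝ => t * y.1) (y.1) t := by
          simpa using (hasDerivAt_id t).mul_const y.1
        exact h1.prodMk (hasDerivAt_const t y.2)
      have := (hfd _ hmem).comp_hasDerivAt t hc
      convert this using 1
      · rfl
      have hv : ((y.1, (0:E)) : ℝ × E) = y.1 • ((1:ℝ), (0:E)) := by simp
      rw [hv, ContinuousLinearMap.map_smul]
    have hcont : ContinuousOn (fun t : ℝ => y.1 • D (t * y.1, y.2)) (Set.uIcc (0:ℝ) 1) := by
      apply ContinuousOn.const_smul
      apply hDk.continuousOn.comp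
      · exact ((continuous_id.mul continuous_const).prodMk continuous_const).continuousOn
      · intro t ht
        rw [Set.uIcc_of_le zero_le_one] at ht
        exact hst y hy t (abs_le.2 ⟨by linarith [ht.1], ht.2⟩)
    have hFTC := intervalIntegral.integral_eq_sub_of_hasDerivAt hder
      (hcont.intervalIntegrable)
    rw [intervalIntegral.integral_smul] at hFTC
    have h00 : f ((0 : ℝ) * y.1, y.2) = 0 := by
      exact h0 _ (hst y hy 0 (by norm_num)) (by simp)
    rw [one_mul, h00, sub_zero] at hFTC
    rw [← hFTC]

section Vanish

lemma vanish_on_slice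
    (m p q N : ℕ) (hq : 1 ≤ q)
    (Dz : Matrix (Fin m) (Fin m) (Polynomial ℝ)) (Dw : Matrix (Fin p) (Fin p) (Polynomial ℝ))
    (hDz0 : ∀ i j, (Dz i j).eval 0 = 0)
    (hDw0 : IsUnit (Dw.map (Polynomial.eval (0 : ℝ))).det)
    (Cz : Matrix (Fin m) (Fin m) ℝ) (Cw : Matrix (Fin p) (Fin p) ℝ)
    (W : Set (ℝ × (Fin m → ℝ) × (Fin p → ℝ)))
    (Vz : ℝ × (Fin m → ℝ) × (Fin p → ℝ) → Fin m → ℝ)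
    (Vw : ℝ × (Fin m → ℝ) × (Fin p → ℝ) → Fin p → ℝ)
    (hVz : ContinuousOn Vz W) (hVw : ContinuousOn Vw W)
    (W₀ : Set (ℝ × (Fin m → ℝ))) (hW₀o : IsOpen W₀)
    (h : ℝ × (Fin m → ℝ) → Fin p → ℝ) (hhc : ContinuousOn h W₀)
    (hgraph : ∀ z ∈ W₀, (z.1, z.2, h z) ∈ W)
    (hinvar : ∀ z ∈ W₀,
      Matrix.mulVec (Dw.map (Polynomial.eval z.1) + z.1 ^ q • Cw) (h z)
          + z.1 ^ (q + 1 + N) • Vw (z.1, z.2, h z)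
        = fderiv ℝ h z
            (z.1 ^ (q + 1),
              Matrix.mulVec (Dz.map (Polynomial.eval z.1) + z.1 ^ q • Cz) z.2
                + z.1 ^ (q + 1 + N) • Vz (z.1, z.2, h z)))
    (ε : ℝ) (hball : Metric.ball (0 : ℝ × (Fin m → ℝ)) ε ⊆ W₀)
    (ℓ : ℕ) (hℓ : ℓ + 1 ≤ q + 1 + N)
    (g : ℝ × (Fin m → ℝ) → Fin p → ℝ)
    (hg : ContDiffOn ℝ 1 g (Metric.ball 0 ε))
    (hgh : ∀ y ∈ Metric.ball (0 : ℝ × (Fin m → ℝ)) ε, h y = y.1 ^ ℓ • g y) :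
    ∀ y ∈ Metric.ball (0 : ℝ × (Fin m → ℝ)) ε, y.1 = 0 → g y = 0 := by
  set r : ℕ := q + 1 + N with hr
  set V : Set (ℝ × (Fin m → ℝ)) := Metric.ball 0 ε with hVdef
  have hVo : IsOpen V := Metric.isOpen_ball
  rintro ⟨x₀, z⟩ h0z (rfl : x₀ = 0)
  -- continuity facts at (0, z)
  have hgd : ∀ y ∈ V, HasFDerivAt g (fderiv ℝ g y) y := fun y hy =>
    (((hg.differentiableOn one_ne_zero) y hy).differentiableAt (hVo.mem_nhds hy)).hasFDerivAt
  have hgC : ContinuousAt g (0, z) := hg.continuousOn.continuousAt (hVo.mem_nhds h0z)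
  have hfC : ContinuousAt (fderiv ℝ g) (0, z) :=
    (hg.continuousOn_fderiv_of_isOpen hVo le_rfl).continuousAt (hVo.mem_nhds h0z)
  have hhC : ContinuousAt h (0, z) := hhc.continuousAt (hW₀o.mem_nhds (hball h0z))
  have hcurve : Tendsto (fun x : ℝ => ((x, z) : ℝ × (Fin m → ℝ))) (𝓝 0) (𝓝 (0, z)) :=
    (continuous_id.prodMk continuous_const).tendsto' 0 (0, z) rfl
  have hev : ∀ᶠ x in 𝓝 (0:ℝ), ((x, z) : ℝ × (Fin m → ℝ)) ∈ V :=
    hcurve.eventually_mem (hVo.mem_nhds h0z)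
  set vv : ℝ → (Fin m → ℝ) := fun x =>
    Matrix.mulVec (Dz.map (Polynomial.eval x) + x ^ q • Cz) z
      + x ^ r • Vz (x, z, h (x, z)) with hvv
  set Φ : ℝ → (Fin p → ℝ) := fun x =>
    Matrix.mulVec (Dw.map (Polynomial.eval x) + x ^ q • Cw) (g (x, z))
      + x ^ (r - ℓ) • Vw (x, z, h (x, z))
      - (((ℓ : ℝ) * x ^ q) • g (x, z) + fderiv ℝ g (x, z) (x ^ (q + 1), vv x)) with hΦ
  -- Claim 1 : Φ vanishes near 0 on x ≠ 0
  have claim1 : ∀ᶠ x in 𝓝[≠] (0:ℝ), Φ x = 0 := by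
    filter_upwards [hev.filter_mono nhdsWithin_le_nhds, self_mem_nhdsWithin] with x hxV hx0
    have hx0 : x ≠ 0 := hx0
    have hxW₀ : ((x, z) : ℝ × (Fin m → ℝ)) ∈ W₀ := hball hxV
    have hi := hinvar (x, z) hxW₀
    dsimp only at hi
    -- compute fderiv of h at (x,z)
    have hsm : HasFDerivAt (fun y : ℝ × (Fin m → ℝ) => y.1 ^ ℓ • g y)
        ((x ^ ℓ) • fderiv ℝ g (x, z)
          + ((((ℓ : ℝ) * x ^ (ℓ - 1)) • ContinuousLinearMap.fst ℝ ℝ (Fin m → ℝ)).smulRight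
              (g (x, z)))) (x, z) := by
      have hc : HasFDerivAt (fun y : ℝ × (Fin m → ℝ) => y.1 ^ ℓ)
          (((ℓ : ℝ) * x ^ (ℓ - 1)) • ContinuousLinearMap.fst ℝ ℝ (Fin m → ℝ)) (x, z) :=
        (hasDerivAt_pow ℓ x).comp_hasFDerivAt (x, z) (hasFDerivAt_fst)
      exact hc.smul (hgd _ hxV)
    have hfe : fderiv ℝ h (x, z)
        = (x ^ ℓ) • fderiv ℝ g (x, z)
          + ((((ℓ : ℝ) * x ^ (ℓ - 1)) • ContinuousLinearMap.fst ℝ ℝ (Fin m → ℝ)).smulRight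
              (g (x, z))) := by
      have heq : h =ᶠ[𝓝 ((x, z) : ℝ × (Fin m → ℝ))] fun y => y.1 ^ ℓ • g y :=
        eventually_of_mem (hVo.mem_nhds hxV) (fun y hy => hgh y hy)
      rw [heq.fderiv_eq, hsm.fderiv]
    rw [hfe] at hi
    have hgx := hgh (x, z) hxV
    simp only [hΦ, hvv]
    rw [sub_eq_zero]
    rw [hgx] at hi ⊢
    simp only [ContinuousLinearMap.add_apply, ContinuousLinearMap.coe_smul',
      ContinuousLinearMap.smulRight_apply, ContinuousLinearMap.coe_fst',
      Pi.smul_apply, smul_eq_mul] at hi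
    rw [Matrix.mulVec_smul] at hi
    have e1 : ∀ v : Fin p → ℝ, (x : ℝ) ^ r • v = x ^ ℓ • (x ^ (r - ℓ) • v) := fun v => by
      rw [← mul_smul, pow_mul_pow_sub x (by omega : ℓ ≤ r)]
    have e2 : ((ℓ : ℝ) * x ^ (ℓ - 1) * x ^ (q + 1)) • g (x, z)
        = x ^ ℓ • (((ℓ : ℝ) * x ^ q) • g (x, z)) := by
      rw [← mul_smul]
      congr 1
      cases ℓ with
      | zero => simp
      | succ k =>
        have hk : k + 1 - 1 = k := rfl
        rw [hk, pow_succ]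
        push_cast
        ring
    rw [e1, e2] at hi
    apply smul_right_injective (Fin p → ℝ) (pow_ne_zero ℓ hx0)
    simp only [smul_add]
    rw [hi]
    abel
  -- Claim 2 : Φ tends to A₀.mulVec (g (0,z))
  have hq0 : (0:ℝ) ^ q = 0 := zero_pow (by omega)
  have t_gx : Tendsto (fun x : ℝ => g (x, z)) (𝓝 0) (𝓝 (g (0, z))) := hgC.tendsto.comp hcurve
  have t_h : Tendsto (fun x : ℝ => h (x, z)) (𝓝 0) (𝓝 (h (0, z))) := hhC.tendsto.comp hcurve
  have hAcont : Continuous (fun x : ℝ => Dw.map (Polynomial.eval x) + x ^ q • Cw) := by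
    apply continuous_matrix
    intro i j
    simp only [Matrix.add_apply, Matrix.map_apply, Matrix.smul_apply, smul_eq_mul]
    exact ((Dw i j).continuous_aeval).add ((continuous_pow q).mul continuous_const)
  have t_A : Tendsto (fun x : ℝ => Dw.map (Polynomial.eval x) + x ^ q • Cw) (𝓝 0)
      (𝓝 (Dw.map (Polynomial.eval 0))) := by
    simpa only [hq0, zero_smul, add_zero] using hAcont.tendsto 0
  have t_mul : Tendsto (fun x : ℝ =>
      Matrix.mulVec (Dw.map (Polynomial.eval x) + x ^ q • Cw) (g (x, z))) (𝓝 0)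
      (𝓝 (Matrix.mulVec (Dw.map (Polynomial.eval 0)) (g (0, z)))) := by
    have hcm : Continuous (fun pc : Matrix (Fin p) (Fin p) ℝ × (Fin p → ℝ) =>
        pc.1.mulVec pc.2) := continuous_fst.matrix_mulVec continuous_snd
    exact (hcm.tendsto _).comp (t_A.prodMk_nhds t_gx)
  have t_curve3 : Tendsto (fun x : ℝ => ((x, z, h (x, z)) : ℝ × (Fin m → ℝ) × (Fin p → ℝ)))
      (𝓝 0) (𝓝 (0, z, h (0, z))) :=
    tendsto_id.prodMk_nhds (tendsto_const_nhds.prodMk_nhds t_h)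
  have t_wv : Tendsto (fun x : ℝ => Vw (x, z, h (x, z))) (𝓝[≠] 0)
      (𝓝 (Vw (0, z, h (0, z)))) := by
    apply (hVw _ (hgraph (0, z) (hball h0z))).tendsto.comp
    rw [tendsto_nhdsWithin_iff]
    refine ⟨t_curve3.mono_left nhdsWithin_le_nhds, ?_⟩
    filter_upwards [hev.filter_mono nhdsWithin_le_nhds] with x hx using hgraph (x, z) (hball hx)
  have t_zv : Tendsto (fun x : ℝ => Vz (x, z, h (x, z))) (𝓝[≠] 0)
      (𝓝 (Vz (0, z, h (0, z)))) := by
    apply (hVz _ (hgraph (0, z) (hball h0z))).tendsto.comp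
    rw [tendsto_nhdsWithin_iff]
    refine ⟨t_curve3.mono_left nhdsWithin_le_nhds, ?_⟩
    filter_upwards [hev.filter_mono nhdsWithin_le_nhds] with x hx using hgraph (x, z) (hball hx)
  have t2 : Tendsto (fun x : ℝ => x ^ (r - ℓ) • Vw (x, z, h (x, z))) (𝓝[≠] 0) (𝓝 0) := by
    have hp : Tendsto (fun x : ℝ => x ^ (r - ℓ)) (𝓝 0) (𝓝 0) := by
      have := (continuous_pow (r - ℓ)).tendsto (0:ℝ)
      simpa [zero_pow (by omega : r - ℓ ≠ 0)] using this
    have := (hp.mono_left nhdsWithin_le_nhds).smul t_wv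
    simpa using this
  have t3 : Tendsto (fun x : ℝ => ((ℓ : ℝ) * x ^ q) • g (x, z)) (𝓝 0) (𝓝 0) := by
    have hp : Tendsto (fun x : ℝ => (ℓ : ℝ) * x ^ q) (𝓝 0) (𝓝 0) := by
      have hcl : Continuous (fun x : ℝ => (ℓ : ℝ) * x ^ q) :=
        continuous_const.mul (continuous_pow q)
      simpa only [hq0, mul_zero] using hcl.tendsto 0
    have := hp.smul t_gx
    simpa using this
  have t_vv : Tendsto vv (𝓝[≠] 0) (𝓝 0) := by
    have hZ : (Dz.map (Polynomial.eval (0:ℝ))) = 0 := by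
      ext i j
      simp [Matrix.map_apply, hDz0 i j]
    have part1 : Tendsto (fun x : ℝ =>
        Matrix.mulVec (Dz.map (Polynomial.eval x) + x ^ q • Cz) z) (𝓝 0) (𝓝 0) := by
      have hAz : Continuous (fun x : ℝ => Dz.map (Polynomial.eval x) + x ^ q • Cz) := by
        apply continuous_matrix
        intro i j
        simp only [Matrix.add_apply, Matrix.map_apply, Matrix.smul_apply, smul_eq_mul]
        exact ((Dz i j).continuous_aeval).add ((continuous_pow q).mul continuous_const)
      have hcm : Continuous (fun x : ℝ =>
          Matrix.mulVec (Dz.map (Polynomial.eval x) + x ^ q • Cz) z) :=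
        hAz.matrix_mulVec continuous_const
      simpa only [hZ, hq0, zero_smul, add_zero, Matrix.zero_mulVec] using hcm.tendsto 0
    have part2 : Tendsto (fun x : ℝ => x ^ r • Vz (x, z, h (x, z))) (𝓝[≠] 0) (𝓝 0) := by
      have hp : Tendsto (fun x : ℝ => x ^ r) (𝓝 0) (𝓝 0) := by
        have := (continuous_pow r).tendsto (0:ℝ)
        simpa [zero_pow (by omega : r ≠ 0)] using this
      have := (hp.mono_left nhdsWithin_le_nhds).smul t_zv
      simpa using this
    have := (part1.mono_left nhdsWithin_le_nhds).add part2
    simpa using this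
  have t4 : Tendsto (fun x : ℝ => fderiv ℝ g (x, z) (x ^ (q + 1), vv x)) (𝓝[≠] 0) (𝓝 0) := by
    have top : Tendsto (fun x : ℝ => fderiv ℝ g (x, z)) (𝓝 0) (𝓝 (fderiv ℝ g (0, z))) :=
      hfC.tendsto.comp hcurve
    have hpq : Tendsto (fun x : ℝ => x ^ (q + 1)) (𝓝 0) (𝓝 0) := by
      have := (continuous_pow (q + 1)).tendsto (0:ℝ)
      simpa [zero_pow (by omega : q + 1 ≠ 0)] using this
    have vec : Tendsto (fun x : ℝ => ((x ^ (q + 1), vv x) : ℝ × (Fin m → ℝ)))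
        (𝓝[≠] 0) (𝓝 (0, 0)) :=
      (hpq.mono_left nhdsWithin_le_nhds).prodMk_nhds t_vv
    have happ : Continuous (fun pc : ((ℝ × (Fin m → ℝ)) →L[ℝ] (Fin p → ℝ)) × (ℝ × (Fin m → ℝ)) =>
        pc.1 pc.2) := isBoundedBilinearMap_apply.continuous
    have := (happ.tendsto (fderiv ℝ g (0, z), ((0 : ℝ), (0 : Fin m → ℝ)))).comp
      ((top.mono_left nhdsWithin_le_nhds).prodMk_nhds vec)
    simpa [Function.comp_def, Prod.mk_zero_zero] using this
  have t_total : Tendsto Φ (𝓝[≠] 0)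
      (𝓝 (Matrix.mulVec (Dw.map (Polynomial.eval 0)) (g (0, z)))) := by
    have := ((t_mul.mono_left nhdsWithin_le_nhds).add t2).sub
      ((t3.mono_left nhdsWithin_le_nhds).add t4)
    simpa using this
  have t_zero : Tendsto Φ (𝓝[≠] 0) (𝓝 0) := by
    rw [tendsto_congr' claim1]
    exact tendsto_const_nhds
  have hlim : Matrix.mulVec (Dw.map (Polynomial.eval 0)) (g (0, z)) = 0 :=
    (tendsto_nhds_unique t_total t_zero)
  have hinj : Function.Injective (Matrix.mulVec (Dw.map (Polynomial.eval (0:ℝ)))) :=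
    Matrix.mulVec_injective_iff_isUnit.2 ((Matrix.isUnit_iff_isUnit_det _).2 hDw0)
  apply hinj
  rw [hlim, Matrix.mulVec_zero]

end Vanish

/-- divisibility claim in the proof of Lemma 3.5: the graph map of an
invariant (center) manifold of a vector field in (TRS)-form is divisible by `x^{q+1+N}`, with a
quotient of class `C^{(n−1)(q+1+N)+1}` where `n = m + p`. -/
theorem center_manifold_graph_divisibility
    (m p q N : ℕ) (hq : 1 ≤ q) (hp : 1 ≤ p)
    (Dz : Matrix (Fin m) (Fin m) (Polynomial ℝ)) (Dw : Matrix (Fin p) (Fin p) (Polynomial ℝ))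
    (hDzdeg : ∀ i j, (Dz i j).degree < (q : ℕ)) (hDwdeg : ∀ i j, (Dw i j).degree < (q : ℕ))
    (hDz0 : ∀ i j, (Dz i j).eval 0 = 0)
    (hDw0 : IsUnit (Dw.map (Polynomial.eval (0 : ℝ))).det)
    (Cz : Matrix (Fin m) (Fin m) ℝ) (Cw : Matrix (Fin p) (Fin p) ℝ)
    (W : Set (ℝ × (Fin m → ℝ) × (Fin p → ℝ)))
    (hW : W ∈ 𝓝 (0 : ℝ × (Fin m → ℝ) × (Fin p → ℝ)))
    (Vz : ℝ × (Fin m → ℝ) × (Fin p → ℝ) → Fin m → ℝ)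
    (Vw : ℝ × (Fin m → ℝ) × (Fin p → ℝ) → Fin p → ℝ)
    (hVz : ContinuousOn Vz W) (hVw : ContinuousOn Vw W)
    (W₀ : Set (ℝ × (Fin m → ℝ))) (hW₀o : IsOpen W₀) (hW₀ : (0 : ℝ × (Fin m → ℝ)) ∈ W₀)
    (h : ℝ × (Fin m → ℝ) → Fin p → ℝ)
    (hh : ContDiffOn ℝ ((m + p) * (q + 1 + N) + 1 : ℕ) h W₀)
    (hgraph : ∀ z ∈ W₀, (z.1, z.2, h z) ∈ W)
    (hinvar : ∀ z ∈ W₀,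
      Matrix.mulVec (Dw.map (Polynomial.eval z.1) + z.1 ^ q • Cw) (h z)
          + z.1 ^ (q + 1 + N) • Vw (z.1, z.2, h z)
        = fderiv ℝ h z
            (z.1 ^ (q + 1),
              Matrix.mulVec (Dz.map (Polynomial.eval z.1) + z.1 ^ q • Cz) z.2
                + z.1 ^ (q + 1 + N) • Vz (z.1, z.2, h z))) :
    ∃ W₁ : Set (ℝ × (Fin m → ℝ)), W₁ ∈ 𝓝 (0 : ℝ × (Fin m → ℝ)) ∧
      ∃ g : ℝ × (Fin m → ℝ) → Fin p → ℝ,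
        ContDiffOn ℝ ((m + p - 1) * (q + 1 + N) + 1 : ℕ) g W₁ ∧
        ∀ z ∈ W₁, h z = z.1 ^ (q + 1 + N) • g z := by
  
  obtain ⟨ε, hε, hball⟩ : ∃ ε > 0, Metric.ball (0 : ℝ × (Fin m → ℝ)) ε ⊆ W₀ :=
    Metric.mem_nhds_iff.1 (hW₀o.mem_nhds hW₀)
  set r : ℕ := q + 1 + N with hr
  set s : ℕ := (m + p) * r + 1 with hs
  have hrs : r + 1 ≤ s := by
    have h1 : 1 * r ≤ (m + p) * r := Nat.mul_le_mul_right r (by omega)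
    omega
  have main : ∀ ℓ : ℕ, ℓ ≤ r → ∃ g : ℝ × (Fin m → ℝ) → Fin p → ℝ,
      ContDiffOn ℝ ((s - ℓ : ℕ) : WithTop ℕ∞) g (Metric.ball 0 ε) ∧
      ∀ y ∈ Metric.ball (0 : ℝ × (Fin m → ℝ)) ε, h y = y.1 ^ ℓ • g y := by
    intro ℓ
    induction ℓ with
    | zero =>
      intro _
      refine ⟨h, ?_, ?_⟩
      · simpa using hh.mono hball
      · intro y hy; simp
    | succ ℓ ih =>
      intro hℓr
      obtain ⟨g, hg, hgh⟩ := ih (by omega)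
      have hsplit : s - ℓ = (s - (ℓ + 1)) + 1 := by omega
      have hg1 : ContDiffOn ℝ 1 g (Metric.ball 0 ε) := by
        apply hg.of_le
        have : (1 : ℕ) ≤ s - ℓ := by omega
        exact_mod_cast this
      have hvan : ∀ y ∈ Metric.ball (0 : ℝ × (Fin m → ℝ)) ε, y.1 = 0 → g y = 0 :=
        vanish_on_slice m p q N hq Dz Dw hDz0 hDw0 Cz Cw W Vz Vw hVz hVw W₀ hW₀o h
          hh.continuousOn hgraph hinvar ε hball ℓ hℓr g hg1 hgh
      have hgk : ContDiffOn ℝ ((s - (ℓ + 1)) + 1 : ℕ) g (Metric.ball 0 ε) := by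
        rw [← hsplit]; exact hg
      obtain ⟨g', hg', hgg'⟩ := div_step (s - (ℓ + 1)) ε g hgk hvan
      refine ⟨g', hg', fun y hy => ?_⟩
      rw [hgh y hy, hgg' y hy, smul_smul, ← pow_succ]
  obtain ⟨g, hg, hgh⟩ := main r le_rfl
  refine ⟨Metric.ball 0 ε, Metric.ball_mem_nhds 0 hε, g, ?_, fun y hy => hgh y hy⟩
  have hcast : (m + p - 1) * r + 1 = s - r := by
    have h1 : (m + p - 1 + 1) * r = (m + p - 1) * r + r := by ring
    have h2 : m + p - 1 + 1 = m + p := by omega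
    rw [h2] at h1
    omega
  rw [hcast]
  exact hg
end DivStep
end
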